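/- If k = 5m+2 and m ≥ 2q+1 with q ≥ 1, then va₃≡(K_{4k+2,4k+2,4k+2}) ≤ 12m − 3q + 3; and if m ≥ 2q with q ≥ 0, then va₃≡(K_{4k+2,4k+2,4k+2}) ≤ 12m − 3q + 6. -/

import Mathlib

open SimpleGraph

/-- `G` has an equitable `(t,k)`-tree-coloring: a map `f : V → Fin t` whose color
classes have sizes differing by at most 1, and each color class induces a forest
(each component a tree) of maximum degree at most `k`. -/
def EqTreeColorable {V : Type} [Fintype V] (G : SimpleGraph V) (t k : ℕ) : Prop :=
  ∃ f : V → Fin t,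
    (∀ i j : Fin t, ({v | f v = i} : Set V).ncard ≤ ({v | f v = j} : Set V).ncard + 1) ∧
    (∀ i : Fin t, (G.induce {v | f v = i}).IsAcyclic) ∧
    (∀ i : Fin t, ∀ v, ((G.induce {v | f v = i}).neighborSet v).ncard ≤ k)

/-- The strong equitable vertex `k`-arboricity: the least `t` such that `G` has an
equitable `(t',k)`-tree-coloring for every `t' ≥ t`. -/
noncomputable def vaStrong {V : Type} [Fintype V] (G : SimpleGraph V) (k : ℕ) : ℕ :=
  sInf {t | ∀ t', t ≤ t' → EqTreeColorable G t' k}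

/-- The complete tripartite graph `K_{n,n,n}`. -/
def K3 (n : ℕ) : SimpleGraph (Σ _ : Fin 3, Fin n) :=
  completeMultipartiteGraph (fun _ => Fin n)

lemma no_edge_acyclic {V : Type*} (G : SimpleGraph V) (h : ∀ u v, ¬ G.Adj u v) : G.IsAcyclic := by
  intro v c hc
  cases c with
  | nil => exact hc.ne_nil rfl
  | cons h1 p => exact h _ _ h1

lemma no_star_cycle {V : Type*} (G : SimpleGraph V) (w : V)
    (h : ∀ u v, G.Adj u v → u = w ∨ v = w) (c : G.Walk w w) : ¬ c.IsCycle := by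
  intro hc
  cases c with
  | nil => exact hc.ne_nil rfl
  | cons h1 p =>
    rename_i x
    cases p with
    | nil => exact G.loopless.irrefl _ h1
    | cons h2 q =>
      rename_i y
      have hxw : x ≠ w := fun e => G.loopless.irrefl w (e ▸ h1)
      have hyw : y = w := by
        rcases h _ _ h2 with e | e
        · exact absurd e hxw
        · exact e
      subst hyw
      have hnd := hc.edges_nodup
      simp [Walk.edges_cons, Sym2.eq_swap] at hnd

lemma star_acyclic {V : Type*} [DecidableEq V] (G : SimpleGraph V) (w : V)
    (h : ∀ u v, G.Adj u v → u = w ∨ v = w) : G.IsAcyclic := by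
  intro v c hc
  have hw : w ∈ c.support := by
    cases c with
    | nil => exact absurd rfl hc.ne_nil
    | cons h1 p =>
      rcases h _ _ h1 with e | e
      · exact e ▸ Walk.start_mem_support _
      · subst e
        exact List.mem_cons_of_mem _ (Walk.start_mem_support p)
  exact no_star_cycle G w h (c.rotate w hw) (hc.rotate hw)


def psum (L : ℕ → Fin 3 → ℕ) (p : Fin 3) (i : ℕ) : ℕ := ∑ i' ∈ Finset.range i, L i' p

lemma psum_succ (L : ℕ → Fin 3 → ℕ) (p : Fin 3) (i : ℕ) :
    psum L p (i+1) = psum L p i + L i p := Finset.sum_range_succ _ i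

lemma psum_mono (L : ℕ → Fin 3 → ℕ) (p : Fin 3) {i j : ℕ} (h : i ≤ j) :
    psum L p i ≤ psum L p j :=
  Finset.sum_le_sum_of_subset (Finset.range_subset_range.2 h)

lemma third_coord_zero (v : Fin 3 → ℕ) (p q r : Fin 3) (hpq : p ≠ q) (hrp : r ≠ p)
    (hrq : r ≠ q) (hsum : v p + v q = v 0 + v 1 + v 2) : v r = 0 := by
  fin_cases p <;> fin_cases q <;> fin_cases r <;> simp_all <;> omega

lemma ncard_ne_singleton {T : Type*} [Finite T] (v : T) :
    ({u : T | u ≠ v}).ncard = Nat.card T - 1 := by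
  rw [show {u : T | u ≠ v} = Set.univ \ {v} from by ext; simp,
    Set.ncard_diff_singleton_of_mem (Set.mem_univ v), Set.ncard_univ]

lemma layout (n t : ℕ) (hn : 0 < n) (L : ℕ → Fin 3 → ℕ)
    (h1 : ∀ p, psum L p t = n)
    (h2 : ∀ i, i < t → ∀ j, j < t → L i 0 + L i 1 + L i 2 ≤ L j 0 + L j 1 + L j 2 + 1)
    (h3 : ∀ i, i < t → (∃ p : Fin 3, ∀ q, q ≠ p → L i q = 0) ∨
      (∃ p q : Fin 3, p ≠ q ∧ L i p = 1 ∧ L i q ≤ 3 ∧ L i p + L i q = L i 0 + L i 1 + L i 2)) :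
    EqTreeColorable (K3 n) t 3 := by
  classical
  have ht : 0 < t := by
    rcases Nat.eq_zero_or_pos t with rfl | h
    · have := h1 0; simp [psum] at this; omega
    · exact h
  have hex : ∀ v : (Σ _ : Fin 3, Fin n), ∃ i, (v.2 : ℕ) < psum L v.1 (i+1) := by
    intro v
    refine ⟨t-1, ?_⟩
    rw [show t - 1 + 1 = t by omega, h1]
    exact v.2.isLt
  let F : (Σ _ : Fin 3, Fin n) → ℕ := fun v => Nat.find (hex v)
  have hFlt : ∀ v, F v < t := by
    intro v
    have : F v ≤ t - 1 := Nat.find_le (by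
      rw [show t - 1 + 1 = t by omega, h1]; exact v.2.isLt)
    omega
  let f : (Σ _ : Fin 3, Fin n) → Fin t := fun v => ⟨F v, hFlt v⟩
  have hfib : ∀ (v : Σ _ : Fin 3, Fin n) (i : ℕ),
      F v = i ↔ (psum L v.1 i ≤ (v.2 : ℕ) ∧ (v.2 : ℕ) < psum L v.1 (i+1)) := by
    intro v i
    rw [Nat.find_eq_iff]
    constructor
    · rintro ⟨hhi, hlo⟩
      refine ⟨?_, hhi⟩
      cases i with
      | zero => simp [psum]
      | succ i' =>
        have := hlo i' (Nat.lt_succ_self i')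
        omega
    · rintro ⟨hlo, hhi⟩
      refine ⟨hhi, fun j hj hcon => ?_⟩
      have := psum_mono L v.1 (show j + 1 ≤ i by omega)
      omega
  -- fiber membership in terms of f
  have hfibf : ∀ (v : Σ _ : Fin 3, Fin n) (i : Fin t),
      f v = i ↔ (psum L v.1 i.val ≤ (v.2 : ℕ) ∧ (v.2 : ℕ) < psum L v.1 (i.val+1)) := by
    intro v i
    rw [← hfib]
    constructor
    · intro h; exact congrArg Fin.val h
    · intro h; exact Fin.ext h
  -- cardinality of fibers
  have hcard : ∀ i : Fin t, ({v | f v = i} : Set (Σ _ : Fin 3, Fin n)).ncard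
      = L i.val 0 + L i.val 1 + L i.val 2 := by
    intro i
    have hset : ({v | f v = i} : Set (Σ _ : Fin 3, Fin n))
        = ↑(Finset.univ.filter (fun v => f v = i)) := by
      ext v; simp
    rw [hset, Set.ncard_coe_finset]
    rw [Finset.card_eq_sum_card_fiberwise (f := fun v : (Σ _ : Fin 3, Fin n) => v.1)
      (t := Finset.univ) (fun x _ => Finset.mem_univ _)]
    have hpart : ∀ p : Fin 3,
        ((Finset.univ.filter (fun v => f v = i)).filter
          (fun v : (Σ _ : Fin 3, Fin n) => v.1 = p)).card = L i.val p := by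
      intro p
      have hle : psum L p (i.val + 1) ≤ n := by
        rw [← h1 p]; exact psum_mono L p i.isLt
      rw [show ((Finset.univ.filter (fun v => f v = i)).filter
          (fun v : (Σ _ : Fin 3, Fin n) => v.1 = p)).card
          = (Finset.Ico (psum L p i.val) (psum L p (i.val+1))).card from ?_]
      · rw [Nat.card_Ico, psum_succ]; omega
      · apply Finset.card_bij (fun v _ => (v.2 : ℕ))
        · rintro ⟨p', j⟩ hm
          simp only [Finset.mem_filter, Finset.mem_univ, true_and] at hm
          obtain ⟨hf, hp⟩ := hm
          subst hp
          rw [hfibf] at hf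
          simpa [Finset.mem_Ico] using hf
        · rintro ⟨p1, j1⟩ h1' ⟨p2, j2⟩ h2' he
          simp only [Finset.mem_filter, Finset.mem_univ, true_and] at h1' h2'
          simp only at he
          obtain ⟨_, hp1⟩ := h1'; obtain ⟨_, hp2⟩ := h2'
          subst hp1; subst hp2
          ext <;> simp [Fin.ext_iff, he]
        · intro x hx
          simp only [Finset.mem_Ico] at hx
          have hxn : x < n := lt_of_lt_of_le hx.2 hle
          refine ⟨⟨p, ⟨x, hxn⟩⟩, ?_, rfl⟩
          simp only [Finset.mem_filter, Finset.mem_univ, true_and, and_true]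
          exact (hfibf _ _).2 ⟨hx.1, hx.2⟩
    rw [Finset.sum_congr rfl (fun p _ => hpart p), Fin.sum_univ_three]
  -- basic membership fact
  have hmemL : ∀ (v : Σ _ : Fin 3, Fin n) (i : Fin t), f v = i → L i.val v.1 ≠ 0 := by
    intro v i hv
    rw [hfibf] at hv
    have := psum_succ L v.1 i.val
    omega
  refine ⟨f, ?_, ?_, ?_⟩
  · intro i j
    rw [hcard i, hcard j]
    exact h2 i.val i.isLt j.val j.isLt
  · intro i
    rcases h3 i.val i.isLt with ⟨p, hp⟩ | ⟨p, q, hpq, hLp, hLq, hsum⟩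
    · apply no_edge_acyclic
      rintro ⟨u, hu⟩ ⟨v, hv⟩ hadj
      have hup : u.1 = p := by
        by_contra hne
        exact hmemL u i hu (hp u.1 hne)
      have hvp : v.1 = p := by
        by_contra hne
        exact hmemL v i hv (hp v.1 hne)
      have : u.1 ≠ v.1 := hadj
      rw [hup, hvp] at this
      exact this rfl
    · -- star case
      have hLr : ∀ r : Fin 3, r ≠ p → r ≠ q → L i.val r = 0 := fun r hrp hrq =>
        third_coord_zero (L i.val) p q r hpq hrp hrq hsum
      have hppos : psum L p (i.val + 1) = psum L p i.val + 1 := by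
        rw [psum_succ, hLp]
      have hwlt : psum L p i.val < n := by
        have : psum L p (i.val+1) ≤ n := by rw [← h1 p]; exact psum_mono L p i.isLt
        omega
      set w : (Σ _ : Fin 3, Fin n) := ⟨p, ⟨psum L p i.val, hwlt⟩⟩ with hw
      have hwS : f w = i := by
        rw [hfibf]
        constructor
        · simp [hw]
        · simp [hw, hppos]
      have hker : ∀ u : (Σ _ : Fin 3, Fin n), f u = i → u.1 = p → u = w := by
        rintro ⟨p', j⟩ hu hp'
        rw [hfibf] at hu
        simp only at hu hp'
        subst hp'
        rw [hppos] at hu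
        rw [hw, Sigma.ext_iff]
        refine ⟨rfl, heq_of_eq ?_⟩
        rw [Fin.ext_iff]
        simp only [Fin.val_mk]
        omega
      apply star_acyclic _ (⟨w, hwS⟩ : {v // f v = i})
      rintro ⟨u, hu⟩ ⟨v, hv⟩ hadj
      have hne : u.1 ≠ v.1 := hadj
      by_cases hup : u.1 = p
      · left; exact Subtype.ext (hker u hu hup)
      by_cases hvp : v.1 = p
      · right; exact Subtype.ext (hker v hv hvp)
      · exfalso
        have huq : u.1 = q := by
          by_contra h'
          exact hmemL u i hu (hLr u.1 hup h')
        have hvq : v.1 = q := by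
          by_contra h'
          exact hmemL v i hv (hLr v.1 hvp h')
        rw [huq, hvq] at hne
        exact hne rfl
  · intro i v
    rcases h3 i.val i.isLt with ⟨p, hp⟩ | ⟨p, q, hpq, hLp, hLq, hsum⟩
    · have : ((K3 n).induce {v | f v = i}).neighborSet v = ∅ := by
        ext u
        simp only [mem_neighborSet, Set.mem_empty_iff_false, iff_false]
        intro hadj
        obtain ⟨u', hu'⟩ := u
        obtain ⟨v', hv'⟩ := v
        have hup : u'.1 = p := by
          by_contra hne
          exact hmemL u' i hu' (hp u'.1 hne)
        have hvp : v'.1 = p := by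
          by_contra hne
          exact hmemL v' i hv' (hp v'.1 hne)
        have : v'.1 ≠ u'.1 := hadj
        rw [hup, hvp] at this
        exact this rfl
      rw [this]
      simp
    · have hsub : ((K3 n).induce {v | f v = i}).neighborSet v ⊆ {u | u ≠ v} := by
        intro u hu
        exact (((K3 n).induce {v | f v = i}).ne_of_adj hu).symm
      have hle := Set.ncard_le_ncard hsub (Set.toFinite _)
      rw [ncard_ne_singleton, Nat.card_coe_set_eq, hcard i] at hle
      omega

def blk (lo cnt x a : ℕ) (i : ℕ) : ℕ :=
  if lo ≤ i ∧ i < lo + cnt then (if i < lo + x then a+1 else a) else 0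

lemma blk_sum (T lo cnt x a : ℕ) (hT : lo + cnt ≤ T) (hx : x ≤ cnt) :
    ∑ i ∈ Finset.range T, blk lo cnt x a i = cnt * a + x := by
  have h0 : ∑ i ∈ Finset.range T, blk lo cnt x a i
      = ∑ i ∈ Finset.Ico lo (lo+cnt), blk lo cnt x a i := by
    rw [Finset.range_eq_Ico]
    refine (Finset.sum_subset ?_ ?_).symm
    · intro i hi
      simp only [Finset.mem_Ico] at hi ⊢
      omega
    · intro i _ hi
      simp only [Finset.mem_Ico] at hi
      simp only [blk]
      rw [if_neg (by omega)]
  rw [h0, ← Finset.sum_Ico_consecutive _ (by omega : lo ≤ lo + x) (by omega : lo + x ≤ lo + cnt)]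
  have h1 : ∑ i ∈ Finset.Ico lo (lo+x), blk lo cnt x a i = x * (a+1) := by
    have hc : ∀ i ∈ Finset.Ico lo (lo+x), blk lo cnt x a i = a+1 := by
      intro i hi
      simp only [Finset.mem_Ico] at hi
      simp only [blk]
      rw [if_pos (by omega), if_pos (by omega)]
    rw [Finset.sum_congr rfl hc, Finset.sum_const, Nat.card_Ico, smul_eq_mul,
      Nat.add_sub_cancel_left]
  have h2 : ∑ i ∈ Finset.Ico (lo+x) (lo+cnt), blk lo cnt x a i = (cnt - x) * a := by
    have hc : ∀ i ∈ Finset.Ico (lo+x) (lo+cnt), blk lo cnt x a i = a := by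
      intro i hi
      simp only [Finset.mem_Ico] at hi
      simp only [blk]
      rw [if_pos (by omega), if_neg (by omega)]
    rw [Finset.sum_congr rfl hc, Finset.sum_const, Nat.card_Ico, smul_eq_mul]
    congr 1
    omega
  rw [h1, h2]
  obtain ⟨d, rfl⟩ : ∃ d, cnt = x + d := ⟨cnt - x, by omega⟩
  simp [Nat.add_sub_cancel_left]
  ring

def starPart (o3 s : ℕ) (w : ℕ → Fin 3 → ℕ) (i : ℕ) (p : Fin 3) : ℕ :=
  if o3 ≤ i ∧ i < o3 + s then w (i - o3) p else 0

def glay (a : ℕ) (c x : Fin 3 → ℕ) (s : ℕ) (w : ℕ → Fin 3 → ℕ) (i : ℕ) (p : Fin 3) : ℕ :=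
  (if p = 0 then blk 0 (c 0) (x 0) a i
   else if p = 1 then blk (c 0) (c 1) (x 1) a i
   else blk (c 0 + c 1) (c 2) (x 2) a i)
  + starPart (c 0 + c 1 + c 2) s w i p

lemma blk_out (lo cnt x a i : ℕ) (h : i < lo ∨ lo + cnt ≤ i) : blk lo cnt x a i = 0 := by
  simp only [blk]; rw [if_neg (by omega)]

lemma blk_in (lo cnt x a i : ℕ) (h1 : lo ≤ i) (h2 : i < lo + cnt) :
    blk lo cnt x a i = if i < lo + x then a+1 else a := by
  simp only [blk]; rw [if_pos (by omega)]

lemma star_out (o3 s : ℕ) (w : ℕ → Fin 3 → ℕ) (i : ℕ) (p : Fin 3)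
    (h : i < o3 ∨ o3 + s ≤ i) : starPart o3 s w i p = 0 := by
  simp only [starPart]; rw [if_neg (by omega)]

lemma star_in (o3 s : ℕ) (w : ℕ → Fin 3 → ℕ) (i : ℕ) (p : Fin 3)
    (h1 : o3 ≤ i) (h2 : i < o3 + s) : starPart o3 s w i p = w (i - o3) p := by
  simp only [starPart]; rw [if_pos (by omega)]

lemma starSumL (T o3 s : ℕ) (w : ℕ → Fin 3 → ℕ) (p : Fin 3) (hT : o3 + s ≤ T) :
    ∑ i ∈ Finset.range T, starPart o3 s w i p = ∑ e ∈ Finset.range s, w e p := by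
  have h0 : ∑ i ∈ Finset.range T, starPart o3 s w i p
      = ∑ i ∈ Finset.Ico o3 (o3+s), starPart o3 s w i p := by
    rw [Finset.range_eq_Ico]
    refine (Finset.sum_subset ?_ ?_).symm
    · intro i hi
      simp only [Finset.mem_Ico] at hi ⊢
      omega
    · intro i _ hi
      simp only [Finset.mem_Ico] at hi
      exact star_out _ _ _ _ _ (by omega)
  rw [h0, Finset.sum_Ico_eq_sum_range]
  have : o3 + s - o3 = s := by omega
  rw [this]
  refine Finset.sum_congr rfl fun k hk => ?_
  simp only [Finset.mem_range] at hk
  rw [star_in _ _ _ _ _ (by omega) (by omega)]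
  congr 1
  omega

lemma glay0 (a : ℕ) (c x : Fin 3 → ℕ) (s : ℕ) (w : ℕ → Fin 3 → ℕ) (i : ℕ) :
    glay a c x s w i 0 = blk 0 (c 0) (x 0) a i + starPart (c 0 + c 1 + c 2) s w i 0 := by
  simp [glay]

lemma glay1 (a : ℕ) (c x : Fin 3 → ℕ) (s : ℕ) (w : ℕ → Fin 3 → ℕ) (i : ℕ) :
    glay a c x s w i 1 = blk (c 0) (c 1) (x 1) a i + starPart (c 0 + c 1 + c 2) s w i 1 := by
  simp [glay]

lemma glay2 (a : ℕ) (c x : Fin 3 → ℕ) (s : ℕ) (w : ℕ → Fin 3 → ℕ) (i : ℕ) :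
    glay a c x s w i 2 = blk (c 0 + c 1) (c 2) (x 2) a i + starPart (c 0 + c 1 + c 2) s w i 2 := by
  simp [glay]

lemma genstar (n t a s : ℕ) (c x : Fin 3 → ℕ) (w : ℕ → Fin 3 → ℕ)
    (hx : ∀ p, x p ≤ c p)
    (ht : t = c 0 + c 1 + c 2 + s)
    (hpart : ∀ p : Fin 3, c p * a + x p + ∑ e ∈ Finset.range s, w e p = n)
    (hwsz : ∀ e, e < s → a ≤ w e 0 + w e 1 + w e 2 ∧ w e 0 + w e 1 + w e 2 ≤ a + 1)
    (hwshape : ∀ e, e < s → ∃ p q : Fin 3, p ≠ q ∧ w e p = 1 ∧ w e q ≤ 3 ∧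
      w e p + w e q = w e 0 + w e 1 + w e 2)
    (hn : 0 < n) :
    EqTreeColorable (K3 n) t 3 := by
  have hstar : ∀ i, c 0 + c 1 + c 2 ≤ i → ∀ p : Fin 3,
      glay a c x s w i p = w (i - (c 0 + c 1 + c 2)) p + 0 ∨ True := fun _ _ _ => Or.inr trivial
  have hszb : ∀ i, i < t →
      a ≤ glay a c x s w i 0 + glay a c x s w i 1 + glay a c x s w i 2 ∧
      glay a c x s w i 0 + glay a c x s w i 1 + glay a c x s w i 2 ≤ a + 1 := by
    intro i hi
    rw [glay0, glay1, glay2]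
    by_cases h0 : i < c 0
    · rw [blk_in 0 (c 0) (x 0) a i (by omega) (by omega),
        blk_out (c 0) (c 1) (x 1) a i (by omega),
        blk_out (c 0 + c 1) (c 2) (x 2) a i (by omega),
        star_out _ _ _ _ _ (by omega), star_out _ _ _ _ _ (by omega),
        star_out _ _ _ _ _ (by omega)]
      split_ifs <;> omega
    by_cases h1 : i < c 0 + c 1
    · rw [blk_out 0 (c 0) (x 0) a i (by omega),
        blk_in (c 0) (c 1) (x 1) a i (by omega) (by omega),
        blk_out (c 0 + c 1) (c 2) (x 2) a i (by omega),
        star_out _ _ _ _ _ (by omega), star_out _ _ _ _ _ (by omega),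
        star_out _ _ _ _ _ (by omega)]
      split_ifs <;> omega
    by_cases h2 : i < c 0 + c 1 + c 2
    · rw [blk_out 0 (c 0) (x 0) a i (by omega),
        blk_out (c 0) (c 1) (x 1) a i (by omega),
        blk_in (c 0 + c 1) (c 2) (x 2) a i (by omega) (by omega),
        star_out _ _ _ _ _ (by omega), star_out _ _ _ _ _ (by omega),
        star_out _ _ _ _ _ (by omega)]
      split_ifs <;> omega
    · rw [blk_out 0 (c 0) (x 0) a i (by omega),
        blk_out (c 0) (c 1) (x 1) a i (by omega),
        blk_out (c 0 + c 1) (c 2) (x 2) a i (by omega),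
        star_in _ _ _ _ _ (by omega) (by omega),
        star_in _ _ _ _ _ (by omega) (by omega),
        star_in _ _ _ _ _ (by omega) (by omega)]
      have := hwsz (i - (c 0 + c 1 + c 2)) (by omega)
      omega
  apply layout n t hn (glay a c x s w)
  · intro p
    have hsplit : psum (glay a c x s w) p t
        = (if p = 0 then ∑ i ∈ Finset.range t, blk 0 (c 0) (x 0) a i
           else if p = 1 then ∑ i ∈ Finset.range t, blk (c 0) (c 1) (x 1) a i
           else ∑ i ∈ Finset.range t, blk (c 0 + c 1) (c 2) (x 2) a i)
          + ∑ i ∈ Finset.range t, starPart (c 0 + c 1 + c 2) s w i p := by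
      unfold psum glay
      rw [Finset.sum_add_distrib]
      congr 1
      split_ifs <;> rfl
    rw [hsplit, starSumL t (c 0 + c 1 + c 2) s w p (by omega)]
    have e0 := blk_sum t 0 (c 0) (x 0) a (by omega) (hx 0)
    have e1 := blk_sum t (c 0) (c 1) (x 1) a (by omega) (hx 1)
    have e2 := blk_sum t (c 0 + c 1) (c 2) (x 2) a (by omega) (hx 2)
    split_ifs with h0 h1
    · subst h0; rw [e0]; have := hpart 0; omega
    · subst h1; rw [e1]; have := hpart 1; omega
    · have hp2 : p = 2 := by fin_cases p <;> simp_all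
      subst hp2; rw [e2]; have := hpart 2; omega
  · intro i hi j hj
    have h1 := hszb i hi
    have h2 := hszb j hj
    omega
  · intro i hi
    have hqsplit : ∀ q : Fin 3, q = 0 ∨ q = 1 ∨ q = 2 := by decide
    by_cases h0 : i < c 0
    · refine Or.inl ⟨0, fun q hq => ?_⟩
      rcases hqsplit q with rfl | rfl | rfl
      · exact absurd rfl hq
      · rw [glay1, blk_out _ _ _ _ _ (by omega), star_out _ _ _ _ _ (by omega)]
      · rw [glay2, blk_out _ _ _ _ _ (by omega), star_out _ _ _ _ _ (by omega)]
    by_cases h1 : i < c 0 + c 1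
    · refine Or.inl ⟨1, fun q hq => ?_⟩
      rcases hqsplit q with rfl | rfl | rfl
      · rw [glay0, blk_out _ _ _ _ _ (by omega), star_out _ _ _ _ _ (by omega)]
      · exact absurd rfl hq
      · rw [glay2, blk_out _ _ _ _ _ (by omega), star_out _ _ _ _ _ (by omega)]
    by_cases h2 : i < c 0 + c 1 + c 2
    · refine Or.inl ⟨2, fun q hq => ?_⟩
      rcases hqsplit q with rfl | rfl | rfl
      · rw [glay0, blk_out _ _ _ _ _ (by omega), star_out _ _ _ _ _ (by omega)]
      · rw [glay1, blk_out _ _ _ _ _ (by omega), star_out _ _ _ _ _ (by omega)]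
      · exact absurd rfl hq
    · have hval : ∀ p : Fin 3, glay a c x s w i p = w (i - (c 0 + c 1 + c 2)) p := by
        intro p
        rcases hqsplit p with rfl | rfl | rfl
        · rw [glay0, blk_out _ _ _ _ _ (by omega), star_in _ _ _ _ _ (by omega) (by omega),
            zero_add]
        · rw [glay1, blk_out _ _ _ _ _ (by omega), star_in _ _ _ _ _ (by omega) (by omega),
            zero_add]
        · rw [glay2, blk_out _ _ _ _ _ (by omega), star_in _ _ _ _ _ (by omega) (by omega),
            zero_add]
      obtain ⟨p, q, hpq, hwp, hwq, hwsum⟩ := hwshape (i - (c 0 + c 1 + c 2)) (by omega)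
      refine Or.inr ⟨p, q, hpq, ?_, ?_, ?_⟩
      · rw [hval p]; exact hwp
      · rw [hval q]; exact hwq
      · rw [hval p, hval q, hval 0, hval 1, hval 2]; exact hwsum

lemma gen (n t a t1 t2 t3 x1 x2 x3 : ℕ)
    (hsum : t1 + t2 + t3 = t)
    (hp1 : t1 * a + x1 = n) (hx1 : x1 ≤ t1)
    (hp2 : t2 * a + x2 = n) (hx2 : x2 ≤ t2)
    (hp3 : t3 * a + x3 = n) (hx3 : x3 ≤ t3)
    (hn : 0 < n) : EqTreeColorable (K3 n) t 3 := by
  apply genstar n t a 0 ![t1,t2,t3] ![x1,x2,x3] (fun _ _ => 0)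
  · intro p; fin_cases p <;> simpa
  · simp; omega
  · intro p; fin_cases p <;> simpa
  · intro e he; exact absurd he (Nat.not_lt_zero e)
  · intro e he; exact absurd he (Nat.not_lt_zero e)
  · exact hn

lemma ML (m t' : ℕ) (ht1 : 10*m+6 ≤ t') (ht2 : t' = 10*m+6 → m % 3 = 0) :
    EqTreeColorable (K3 (20*m+10)) t' 3 := by
  have hn : 0 < 20*m+10 := by omega
  have ht2' : t' ≠ 10*m+6 ∨ m % 3 = 0 := by
    by_cases h : t' = 10*m+6
    · exact Or.inr (ht2 h)
    · exact Or.inl h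
  clear ht2
  by_cases hF1 : t' = 15*m+7
  · subst hF1
    apply genstar (20*m+10) (15*m+7) 4 2 ![5*m+2, 5*m+2, 5*m+1] ![2, 0, 0] (fun _ => ![0,1,3])
    · intro p; fin_cases p <;> simp <;> omega
    · simp; omega
    · intro p; fin_cases p <;> simp [Finset.sum_range_succ] <;> omega
    · intro e _; decide
    · intro e _; decide
    · exact hn
  by_cases hF2 : t' = 15*m+8
  · subst hF2
    apply genstar (20*m+10) (15*m+8) 3 2 ![5*m+3, 5*m+2, 5*m+1] ![5*m+1, 5*m+2, 5*m+1]
      (fun _ => ![0,1,3])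
    · intro p; fin_cases p <;> simp <;> omega
    · simp; omega
    · intro p; fin_cases p <;> simp [Finset.sum_range_succ] <;> omega
    · intro e _; decide
    · intro e _; decide
    · exact hn
  by_cases hF4 : t' = 20*m+9 ∧ m % 3 = 2
  · obtain ⟨hF4a, hF4b⟩ := hF4
    subst hF4a
    apply genstar (20*m+10) (20*m+9) 3 2 ![(20*m+8)/3, (20*m+5)/3, (20*m+8)/3] ![1, 1, 1]
      (fun e => if e = 0 then ![1,2,0] else ![0,2,1])
    · intro p; fin_cases p <;> simp <;> omega
    · simp; omega
    · intro p; fin_cases p <;> simp [Finset.sum_range_succ] <;> omega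
    · intro e he; interval_cases e <;> decide
    · intro e he; interval_cases e <;> decide
    · exact hn
  by_cases hF3 : t' = 20*m+10 ∧ m % 3 = 0
  · obtain ⟨hF3a, hF3b⟩ := hF3
    subst hF3a
    apply genstar (20*m+10) (20*m+10) 3 2 ![(20*m+9)/3, (20*m+6)/3, (20*m+9)/3] ![0, 0, 0]
      (fun e => if e = 0 then ![1,2,0] else ![0,2,1])
    · intro p; fin_cases p <;> simp
    · simp; omega
    · intro p; fin_cases p <;> simp [Finset.sum_range_succ] <;> omega
    · intro e he; interval_cases e <;> decide
    · intro e he; interval_cases e <;> decide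
    · exact hn
  by_cases hF5 : t' = 20*m+10 ∧ m % 3 = 2
  · obtain ⟨hF5a, hF5b⟩ := hF5
    subst hF5a
    apply genstar (20*m+10) (20*m+10) 3 3 ![(20*m+8)/3, (20*m+5)/3, (20*m+8)/3] ![0, 0, 0]
      (fun e => if e ≤ 1 then ![1,2,0] else ![0,1,2])
    · intro p; fin_cases p <;> simp
    · simp; omega
    · intro p; fin_cases p <;> simp [Finset.sum_range_succ] <;> omega
    · intro e he; interval_cases e <;> decide
    · intro e he; interval_cases e <;> decide
    · exact hn
  by_cases hF6 : t' = 20*m+11 ∧ m % 3 = 0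
  · obtain ⟨hF6a, hF6b⟩ := hF6
    subst hF6a
    apply genstar (20*m+10) (20*m+11) 2 1 ![(20*m+6)/3 + 2, (20*m+9)/3, (20*m+9)/3]
      ![(20*m+6)/3, (20*m+9)/3, (20*m+9)/3] (fun _ => ![0,1,1])
    · intro p; fin_cases p <;> simp <;> omega
    · simp; omega
    · intro p; fin_cases p <;> simp [Finset.sum_range_succ] <;> omega
    · intro e _; decide
    · intro e _; decide
    · exact hn
  -- generic cases
  rcases le_or_gt t' (12*m+6) with h5 | h5
  · exact gen (20*m+10) t' 5 (t'/3) ((t'+1)/3) ((t'+2)/3)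
      (20*m+10 - 5*(t'/3)) (20*m+10 - 5*((t'+1)/3)) (20*m+10 - 5*((t'+2)/3))
      (by omega) (by omega) (by omega) (by omega) (by omega) (by omega) (by omega) hn
  rcases le_or_gt t' (15*m+6) with h4 | h4
  · exact gen (20*m+10) t' 4 (t'/3) ((t'+1)/3) ((t'+2)/3)
      (20*m+10 - 4*(t'/3)) (20*m+10 - 4*((t'+1)/3)) (20*m+10 - 4*((t'+2)/3))
      (by omega) (by omega) (by omega) (by omega) (by omega) (by omega) (by omega) hn
  rcases le_or_gt t' (20*m+10) with h3 | h3
  · exact gen (20*m+10) t' 3 (t'/3) ((t'+1)/3) ((t'+2)/3)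
      (20*m+10 - 3*(t'/3)) (20*m+10 - 3*((t'+1)/3)) (20*m+10 - 3*((t'+2)/3))
      (by omega) (by omega) (by omega) (by omega) (by omega) (by omega) (by omega) hn
  rcases le_or_gt t' (30*m+15) with hh2 | hh2
  · exact gen (20*m+10) t' 2 (t'/3) ((t'+1)/3) ((t'+2)/3)
      (20*m+10 - 2*(t'/3)) (20*m+10 - 2*((t'+1)/3)) (20*m+10 - 2*((t'+2)/3))
      (by omega) (by omega) (by omega) (by omega) (by omega) (by omega) (by omega) hn
  rcases le_or_gt t' (60*m+29) with hh1 | hh1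
  · exact gen (20*m+10) t' 1 (t'/3) ((t'+1)/3) ((t'+2)/3)
      (20*m+10 - 1*(t'/3)) (20*m+10 - 1*((t'+1)/3)) (20*m+10 - 1*((t'+2)/3))
      (by omega) (by omega) (by omega) (by omega) (by omega) (by omega) (by omega) hn
  · exact gen (20*m+10) t' 0 (t'/3) ((t'+1)/3) ((t'+2)/3)
      (20*m+10) (20*m+10) (20*m+10)
      (by omega) (by omega) (by omega) (by omega) (by omega) (by omega) (by omega) hn


theorem stmt19 (k m : ℕ) (hk : k = 5 * m + 2) :
    (∀ q : ℕ, 1 ≤ q → 2 * q + 1 ≤ m → vaStrong (K3 (4 * k + 2)) 3 ≤ 12 * m - 3 * q + 3) ∧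
    (∀ q : ℕ, 2 * q ≤ m → vaStrong (K3 (4 * k + 2)) 3 ≤ 12 * m - 3 * q + 6) := by
  subst hk
  have hkn : 4 * (5 * m + 2) + 2 = 20 * m + 10 := by ring
  rw [hkn]
  constructor
  · intro q hq hm
    apply Nat.sInf_le
    intro t' ht'
    refine ML m t' (by omega) (fun h => ?_)
    have hm3 : m = 3 := by omega
    omega
  · intro q hm
    apply Nat.sInf_le
    intro t' ht'
    refine ML m t' (by omega) (fun h => ?_)
    have hm2 : 2*m = 3*q := by omega
    omega
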